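/- Let a_1,...,a_N be distinct complex numbers with N ≥ 2 and u_1,...,u_N nonzero complex numbers satisfying ∑_i u_i = 0 and ∑_i a_i u_i = 0. Define P_u(X) = ∑_i u_i ∏_{j≠i}(X - a_j). Then ∑_{i=1}^N u_i · P_u'(a_i)/P_u(a_i) = 0. -/
import Mathlib


open Polynomial Finset

/-- For distinct `a₁,…,a_N` (`N ≥ 2`) and nonzero `u₁,…,u_N` with
`∑ u_i = 0` and `∑ a_i u_i = 0`, and `P_u(X) = ∑ i, u_i ∏_{j≠i}(X - a_j)`, one has
`∑ i, u_i P_u'(a_i)/P_u(a_i) = 0`. -/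
theorem stmt_2 (N : ℕ) (hN : 2 ≤ N) (a u : Fin N → ℂ)
    (ha : Function.Injective a) (hu : ∀ i, u i ≠ 0)
    (hu0 : ∑ i, u i = 0) (hu1 : ∑ i, a i * u i = 0)
    (Pu : Polynomial ℂ)
    (hPu : Pu = ∑ i, C (u i) * ∏ j ∈ Finset.univ.erase i, (X - C (a j))) :
    ∑ i, u i * (Pu.derivative.eval (a i) / Pu.eval (a i)) = 0 := by
  classical
  have hainj : Set.InjOn a (Finset.univ : Finset (Fin N)) := ha.injOn
  -- evaluation of Pu at a node
  have heval : ∀ i, Pu.eval (a i) = u i * ∏ j ∈ Finset.univ.erase i, (a i - a j) := by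
    intro i
    rw [hPu, eval_finset_sum, Finset.sum_eq_single i]
    · simp [eval_prod]
    · intro k _ hk
      have hi' : i ∈ Finset.univ.erase k := by
        simp [Ne.symm hk]
      rw [eval_mul, eval_prod]
      rw [Finset.prod_eq_zero hi' (by simp)]
      ring
    · simp
  have hprod : ∀ i : Fin N, (∏ j ∈ Finset.univ.erase i, (a i - a j)) ≠ 0 := by
    intro i
    refine Finset.prod_ne_zero_iff.mpr fun j hj => sub_ne_zero_of_ne ?_
    exact fun h => (Finset.mem_erase.mp hj).1 (ha h.symm)
  have hPune : ∀ i, Pu.eval (a i) ≠ 0 := fun i => by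
    rw [heval i]; exact mul_ne_zero (hu i) (hprod i)
  -- natDegree of Pu ≤ N - 1
  have hdegPu : Pu.natDegree ≤ N - 1 := by
    rw [hPu]
    refine Polynomial.natDegree_sum_le_of_forall_le _ _ fun i _ => ?_
    refine (Polynomial.natDegree_mul_le).trans ?_
    have : (∏ j ∈ Finset.univ.erase i, (X - C (a j))).natDegree ≤ N - 1 := by
      refine (Polynomial.natDegree_prod_le _ _).trans ?_
      simp [Polynomial.natDegree_X_sub_C, Finset.card_erase_of_mem]
    simpa using this
  have hdegD : Pu.derivative.natDegree < N - 1 := by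
    have h1 := Polynomial.natDegree_derivative_le Pu
    omega
  -- derivative has degree < N, so it equals its interpolant
  have hdltN : (Pu.derivative).degree < (Finset.univ : Finset (Fin N)).card := by
    rw [Finset.card_univ, Fintype.card_fin]
    calc (Pu.derivative).degree ≤ (Pu.derivative).natDegree := Polynomial.degree_le_natDegree
      _ < (N : WithBot ℕ) := by exact_mod_cast (by omega : Pu.derivative.natDegree < N)
  have hinterp := Lagrange.eq_interpolate (v := a) (s := Finset.univ) hainj hdltN
  -- take the coefficient at N - 1
  have hcoeff := congrArg (fun p => Polynomial.coeff p (N - 1)) hinterp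
  simp only [Lagrange.interpolate_apply, Polynomial.finset_sum_coeff] at hcoeff
  have hbasis : ∀ i : Fin N,
      (C (Pu.derivative.eval (a i)) * Lagrange.basis Finset.univ a i).coeff (N - 1)
        = Pu.derivative.eval (a i) * Lagrange.nodalWeight Finset.univ a i := by
    intro i
    have hb : Lagrange.basis Finset.univ a i
        = C (Lagrange.nodalWeight Finset.univ a i) * Lagrange.nodal (Finset.univ.erase i) a := by
      rw [Lagrange.basis_eq_prod_sub_inv_mul_nodal_div (Finset.mem_univ i),
        ← Lagrange.nodal_erase_eq_nodal_div (Finset.mem_univ i)]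
    rw [hb, ← mul_assoc, ← C_mul, Polynomial.coeff_C_mul]
    have hmonic : (Lagrange.nodal (Finset.univ.erase i) a).Monic := Lagrange.nodal_monic
    have hnd : (Lagrange.nodal (Finset.univ.erase i) a).natDegree = N - 1 := by
      simp [Lagrange.natDegree_nodal, Finset.card_erase_of_mem]
    rw [← hnd, hmonic.coeff_natDegree, mul_one]
  rw [Finset.sum_congr rfl (fun i _ => hbasis i)] at hcoeff
  have hzero : Pu.derivative.coeff (N - 1) = 0 :=
    Polynomial.coeff_eq_zero_of_natDegree_lt hdegD
  rw [hzero] at hcoeff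
  -- now rewrite the goal
  have : ∀ i : Fin N, u i * (Pu.derivative.eval (a i) / Pu.eval (a i))
      = Pu.derivative.eval (a i) * Lagrange.nodalWeight Finset.univ a i := by
    intro i
    rw [heval i, Lagrange.nodalWeight, Finset.prod_inv_distrib]
    field_simp
    exact mul_div_mul_left _ _ (hu i)
  rw [Finset.sum_congr rfl (fun i _ => this i), ← hcoeff]
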